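/- arXiv:2005.06311 — 4 statements merged into one kernel-verified Lean document; each statement's English description precedes it below -/
import Mathlib

section
/- Let h : [0,1] → [0,1] be monotone nondecreasing and 2-Lipschitz (i.e., |h(x) − h(y)| ≤ 2|x−y|). For q ∈ [0,1], write q = q̄ + z/n with q̄ a multiple of 1/n, z ∈ [0,1), and q̂ = q̄ + 1/n. If h is linear on [q̄, q̂], then with H(q) = q·h(q) − ∫₀^q h(y) dy, we have −3/(4n²) ≤ H(q) − ((1−z)·H(q̄) + z·H(q̂)) ≤ 0. -/
open Set intervalIntegral

set_option maxHeartbeats 1600000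

theorem stmt_9 (n : ℕ) (hn : 0 < n) (h : ℝ → ℝ)
    (hmono : MonotoneOn h (Icc 0 (1 + 1 / n)))
    (hrange : ∀ x ∈ Icc (0:ℝ) (1 + 1 / n), h x ∈ Icc (0:ℝ) 1)
    (hlip : ∀ x y : ℝ, x ∈ Icc (0:ℝ) (1 + 1 / n) → y ∈ Icc (0:ℝ) (1 + 1 / n) →
      |h x - h y| ≤ 2 * |x - y|)
    (haffine : ∀ i : ℕ, i ≤ n → ∀ x ∈ Icc ((i : ℝ) / n) ((i + 1) / n),
      h x = h (i / n) + (x - i / n) * n * (h ((i + 1) / n) - h (i / n)))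
    (q qbar qhat z : ℝ) (hq : q ∈ Ico (0:ℝ) 1)
    (hqbar : qbar = (⌊(n : ℝ) * q⌋ : ℝ) / n)
    (hz : z = n * q - n * qbar)
    (hqhat : qhat = qbar + 1 / n)
    (H : ℝ → ℝ) (hH : ∀ t, H t = t * h t - ∫ y in (0:ℝ)..t, h y) :
    -3 / (4 * n ^ 2) ≤ H q - ((1 - z) * H qbar + z * H qhat) ∧
    H q - ((1 - z) * H qbar + z * H qhat) ≤ 0 := by
  have npos : (0:ℝ) < n := by exact_mod_cast hn
  have nne : (n:ℝ) ≠ 0 := ne_of_gt npos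
  obtain ⟨hq0, hq1⟩ := hq
  -- floor facts
  have hf0 : 0 ≤ ⌊(n:ℝ) * q⌋ := Int.floor_nonneg.mpr (by positivity)
  set f : ℤ := ⌊(n:ℝ) * q⌋ with hf
  have hfle : (f:ℝ) ≤ n * q := Int.floor_le _
  have hflt : (n:ℝ) * q < f + 1 := Int.lt_floor_add_one _
  have hfn : (f:ℝ) + 1 ≤ n := by
    have h1 : (f:ℝ) < n := lt_of_le_of_lt hfle (by nlinarith)
    have h2 : f < (n:ℤ) := by exact_mod_cast h1
    exact_mod_cast h2
  set m : ℕ := f.toNat with hmdef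
  have hmf : (m:ℝ) = (f:ℝ) := by
    have : ((f.toNat : ℤ) : ℝ) = (f:ℝ) := by rw [Int.toNat_of_nonneg hf0]
    exact_mod_cast this
  have hmn : m ≤ n := by
    have h1 : (m:ℝ) + 1 ≤ n := by rw [hmf]; exact hfn
    have h2 : (m:ℝ) < n := by linarith
    exact_mod_cast h2.le
  have hqbar' : qbar = (m:ℝ) / n := by rw [hqbar, hmf]
  have hqhat' : qhat = ((m:ℝ) + 1) / n := by
    rw [hqhat, hqbar']; field_simp
  -- ordering
  have hqbar0 : 0 ≤ qbar := by
    rw [hqbar']; exact div_nonneg (Nat.cast_nonneg m) npos.le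
  have hqbarq : qbar ≤ q := by
    rw [hqbar', div_le_iff₀ npos, hmf]; linarith
  have hqqhat : q < qhat := by
    rw [hqhat', lt_div_iff₀ npos, hmf]; linarith
  have hqhat1 : qhat ≤ 1 := by
    rw [hqhat', div_le_one npos, hmf]; linarith
  have h1le : (1:ℝ) ≤ 1 + 1/n := by
    have : (0:ℝ) < 1/n := by positivity
    linarith
  have hsub : Icc qbar qhat ⊆ Icc (0:ℝ) (1 + 1/n) := by
    intro x hx
    exact ⟨le_trans hqbar0 hx.1, le_trans (le_trans hx.2 hqhat1) h1le⟩
  have hqmem : q ∈ Icc qbar qhat := ⟨hqbarq, hqqhat.le⟩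
  have hqbarmem : qbar ∈ Icc qbar qhat := ⟨le_refl _, by linarith⟩
  have hqhatmem : qhat ∈ Icc qbar qhat := ⟨by linarith, le_refl _⟩
  -- z facts
  have hzval : z = n * q - (f:ℝ) := by
    rw [hz, hqbar]; field_simp
  have hz0 : 0 ≤ z := by rw [hzval]; linarith
  have hz1 : z < 1 := by rw [hzval]; linarith
  have hqz : q = qbar + z / n := by
    rw [hzval, hqbar]; field_simp; ring
  -- affine formula
  obtain ⟨s, hs⟩ : ∃ s : ℝ, s = (n:ℝ) * (h qhat - h qbar) := ⟨_, rfl⟩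
  have haff : ∀ x ∈ Icc qbar qhat, h x = h qbar + s * (x - qbar) := by
    intro x hx
    have h1 := haffine m hmn x (by rwa [← hqbar', ← hqhat'])
    rw [← hqbar', ← hqhat'] at h1
    rw [h1, hs]; ring
  have hab : h qbar ≤ h qhat := hmono (hsub hqbarmem) (hsub hqhatmem) (by linarith)
  have hs0 : 0 ≤ s := by rw [hs]; nlinarith
  have hs2 : s ≤ 2 := by
    have hl := hlip qhat qbar (hsub hqhatmem) (hsub hqbarmem)
    have hd : qhat - qbar = 1 / n := by rw [hqhat]; ring
    rw [abs_of_nonneg (by linarith), abs_of_nonneg (by rw [hd]; positivity), hd] at hl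
    rw [hs]
    calc (n:ℝ) * (h qhat - h qbar) ≤ n * (2 * (1/n)) :=
          mul_le_mul_of_nonneg_left hl npos.le
      _ = 2 := by field_simp
  -- integrability
  have hintg : ∀ p r : ℝ, p ∈ Icc (0:ℝ) (1+1/n) → r ∈ Icc (0:ℝ) (1+1/n) →
      IntervalIntegrable h MeasureTheory.volume p r := by
    intro p r hp hr
    apply MonotoneOn.intervalIntegrable
    apply hmono.mono
    intro x hx
    rcases le_total p r with hpr | hpr
    · rw [uIcc_of_le hpr] at hx
      exact ⟨le_trans hp.1 hx.1, le_trans hx.2 hr.2⟩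
    · rw [uIcc_of_ge hpr] at hx
      exact ⟨le_trans hr.1 hx.1, le_trans hx.2 hp.2⟩
  -- integral of affine piece
  have hint : ∀ t ∈ Icc qbar qhat,
      (∫ y in qbar..t, h y) = h qbar * (t - qbar) + s / 2 * (t - qbar) ^ 2 := by
    intro t ht
    have heq : (∫ y in qbar..t, h y)
        = ∫ y in qbar..t, ((h qbar - s * qbar) + s * y) := by
      apply intervalIntegral.integral_congr
      intro y hy
      rw [uIcc_of_le ht.1] at hy
      rw [haff y ⟨hy.1, le_trans hy.2 ht.2⟩]; ring
    rw [heq, intervalIntegral.integral_add intervalIntegrable_const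
      (by exact (continuous_const.mul continuous_id').intervalIntegrable _ _ : IntervalIntegrable (fun y : ℝ => s * y) MeasureTheory.volume qbar t),
      intervalIntegral.integral_const_mul, integral_id, intervalIntegral.integral_const,
      smul_eq_mul]
    ring
  -- splitting integrals
  have hzeromem : (0:ℝ) ∈ Icc (0:ℝ) (1+1/n) := ⟨le_refl _, by linarith⟩
  have hsplit : ∀ t ∈ Icc qbar qhat,
      (∫ y in (0:ℝ)..t, h y) = (∫ y in (0:ℝ)..qbar, h y) + ∫ y in qbar..t, h y := by
    intro t ht
    exact (intervalIntegral.integral_add_adjacent_intervals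
      (hintg 0 qbar hzeromem (hsub hqbarmem)) (hintg qbar t (hsub hqbarmem) (hsub ht))).symm
  -- key identity
  have hqh : h q = h qbar + s * (q - qbar) := haff q hqmem
  have hbval : h qhat = h qbar + s * (qhat - qbar) := haff qhat hqhatmem
  have hdhat : qhat - qbar = 1 / n := by rw [hqhat]; ring
  have hdq : q - qbar = z / n := by rw [hqz]; ring
  have hD : H q - ((1 - z) * H qbar + z * H qhat) = s * (z * (z - 1)) / (2 * n ^ 2) := by
    rw [hH, hH, hH, hsplit q hqmem, hsplit qbar hqbarmem, hsplit qhat hqhatmem,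
      hint q hqmem, hint qbar hqbarmem, hint qhat hqhatmem, hqh, hbval,
      hdhat, hdq, hqz, hqhat]
    field_simp
    ring
  rw [hD]
  have hzz : - (1:ℝ)/4 ≤ z * (z - 1) := by nlinarith [sq_nonneg (z - 1/2)]
  have hzz0 : z * (z - 1) ≤ 0 := mul_nonpos_of_nonneg_of_nonpos hz0 (by linarith)
  have hkey : 2 * (z * (z - 1)) ≤ s * (z * (z - 1)) := by
    exact mul_le_mul_of_nonpos_right hs2 hzz0
  have hnum : -(1:ℝ)/2 ≤ s * (z * (z - 1)) := by linarith
  have hnum0 : s * (z * (z - 1)) ≤ 0 := mul_nonpos_of_nonneg_of_nonpos hs0 hzz0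
  constructor
  · rw [div_le_div_iff₀ (by positivity) (by positivity)]
    have hx : (-(1:ℝ)/2) * (4 * n ^ 2) ≤ s * (z * (z - 1)) * (4 * n ^ 2) :=
      mul_le_mul_of_nonneg_right hnum (by positivity)
    nlinarith
  · exact div_nonpos_of_nonpos_of_nonneg hnum0 (by positivity)
end

section
/- For a nondecreasing function g : [0,1] → [0,1] that is 1-Lipschitz on the grid (g(x+1/n) − g(x) ≤ 1/n) and affine on each interval [i/n, (i+1)/n], fixed τ ∈ [0,1], and θ ∈ [0,1) with grid points θ̄ = ⌊nθ⌋/n, θ̂ = θ̄ + 1/n, z = nθ − nθ̄: the function G(θ) := −(1−τ)(1−θ)g(θ) satisfies G(θ) − ((1−z)·G(θ̄) + z·G(θ̂)) ≥ −1/(4n²). -/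
open Set

set_option maxHeartbeats 1000000 in
theorem stmt_12 (n : ℕ) (hn : 0 < n) (g : ℝ → ℝ)
    (hmono : MonotoneOn g (Icc 0 1))
    (hrange : ∀ x ∈ Icc (0:ℝ) 1, g x ∈ Icc (0:ℝ) 1)
    (haffine : ∀ i : ℕ, i < n → ∀ x ∈ Icc ((i : ℝ) / n) ((i + 1) / n),
      g x = g (i / n) + (x - i / n) * n * (g ((i + 1) / n) - g (i / n)))
    (hlipgrid : ∀ i : ℕ, i < n → g (((i : ℝ) + 1) / n) - g (i / n) ≤ 1 / n)
    (τ : ℝ) (hτ : τ ∈ Icc (0:ℝ) 1)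
    (θ θbar θhat z : ℝ) (hθ : θ ∈ Ico (0:ℝ) 1)
    (hθbar : θbar = (⌊(n : ℝ) * θ⌋ : ℝ) / n)
    (hz : z = n * θ - n * θbar)
    (hθhat : θhat = θbar + 1 / n)
    (G : ℝ → ℝ) (hG : ∀ t, G t = -((1 - τ) * (1 - t) * g t)) :
    G θ - ((1 - z) * G θbar + z * G θhat) ≥ -1 / (4 * n ^ 2) := by
  obtain ⟨hθ0, hθ1⟩ := hθ
  have hn0 : (0:ℝ) < n := by exact_mod_cast hn
  have hnθ0 : (0:ℝ) ≤ n * θ := by positivity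
  set i : ℕ := (⌊(n : ℝ) * θ⌋).toNat with hi
  have hfloor : ((i : ℝ)) = (⌊(n : ℝ) * θ⌋ : ℝ) := by
    rw [hi]
    exact_mod_cast Int.toNat_of_nonneg (Int.le_floor.2 (by simpa using hnθ0))
  have hflo : (i : ℝ) ≤ n * θ := hfloor ▸ Int.floor_le _
  have hfhi : n * θ < (i : ℝ) + 1 := by rw [hfloor]; exact Int.lt_floor_add_one _
  have hin : i < n := by
    by_contra h
    push_neg at h
    have : (n : ℝ) ≤ i := by exact_mod_cast h
    nlinarith
  have hθbar' : θbar = (i : ℝ) / n := by rw [hθbar, hfloor]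
  have hθhat' : θhat = ((i : ℝ) + 1) / n := by
    rw [hθhat, hθbar']; field_simp
  have hθmem : θ ∈ Icc ((i : ℝ) / n) (((i : ℝ) + 1) / n) := by
    constructor
    · rw [div_le_iff₀ hn0]; linarith [hflo]
    · rw [le_div_iff₀ hn0]; nlinarith
  have hgθ := haffine i hin θ hθmem
  have hz' : z = n * θ - i := by rw [hz, hθbar']; field_simp
  have hz0 : 0 ≤ z := by rw [hz']; linarith
  have hz1 : z ≤ 1 := by rw [hz']; linarith
  set A := g ((i : ℝ) / n) with hA
  set B := g (((i : ℝ) + 1) / n) with hB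
  have hgmono : A ≤ B := by
    apply hmono
    · refine ⟨by positivity, ?_⟩
      rw [div_le_one hn0]; exact_mod_cast Nat.le_of_lt hin
    · refine ⟨by positivity, ?_⟩
      rw [div_le_one hn0]; exact_mod_cast hin
    · gcongr; linarith
  have hτ0 : τ ≤ 1 := hτ.2
  have hne : (n:ℝ) ≠ 0 := hn0.ne'
  have hzn : (θ - (i:ℝ)/n) * n = z := by rw [hz']; field_simp
  have key : g θ = A + z * (B - A) := by rw [hgθ, ← hzn]
  have hgb : g θbar = A := by rw [hθbar']
  have hgh : g θhat = B := by rw [hθhat']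
  rw [hG θ, hG θbar, hG θhat, key, hgb, hgh]
  have hθeq : θ = θbar + z / n := by rw [hz']; rw [hθbar']; field_simp; ring
  rw [hθeq, hθhat]
  have expand : -((1 - τ) * (1 - (θbar + z / n)) * (A + z * (B - A))) -
      ((1 - z) * -((1 - τ) * (1 - θbar) * A) + z * -((1 - τ) * (1 - (θbar + 1 / n)) * B))
      = -((1 - τ) * z * (1 - z) * (B - A) / n) := by
    field_simp
    ring
  rw [expand]
  have hΔ : B - A ≤ 1 / n := hlipgrid i hin
  have hΔ0 : 0 ≤ B - A := by linarith
  have hτ1 : 0 ≤ 1 - τ := by linarith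
  have hτ2 : 1 - τ ≤ 1 := by linarith [hτ.1]
  have s1 : 0 ≤ z * (1 - z) * (B - A) :=
    mul_nonneg (mul_nonneg hz0 (by linarith)) hΔ0
  have s2 : (1 - τ) * z * (1 - z) * (B - A) ≤ z * (1 - z) * (B - A) := by
    calc (1 - τ) * z * (1 - z) * (B - A) = (1 - τ) * (z * (1 - z) * (B - A)) := by ring
    _ ≤ z * (1 - z) * (B - A) := mul_le_of_le_one_left s1 hτ2
  have h4 : z * (1 - z) ≤ 1 / 4 := by nlinarith [sq_nonneg (2 * z - 1)]
  have s3 : z * (1 - z) * (B - A) ≤ (1 / 4) * (B - A) :=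
    mul_le_mul_of_nonneg_right h4 hΔ0
  have s4 : (1 / 4 : ℝ) * (B - A) ≤ 1 / (4 * n) := by
    have he : (1 / 4 : ℝ) * (1 / n) = 1 / (4 * n) := by ring
    linarith
  have s5 : (1 - τ) * z * (1 - z) * (B - A) / n ≤ (1 / (4 * n)) / n := by
    exact div_le_div_of_nonneg_right (by linarith) hn0.le
  have s6 : ((1 : ℝ) / (4 * n)) / n = 1 / (4 * n ^ 2) := by rw [div_div]; congr 1; ring
  have s7 : (-1 : ℝ) / (4 * n ^ 2) = -(1 / (4 * n ^ 2)) := by ring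
  rw [s7, ge_iff_le, neg_le_neg_iff, ← s6]
  exact s5
end

section
/- Suppose h : [0,1] → [0,1] is nondecreasing with h(0) = 0, h(1) = 1, and suppose the function q ↦ q·h(q) − ∫₀^q h(y) dy + 1 − q attains value at least Γ at every multiple of 1/n in [0,1] plus margin 3/(4n²), h is 2-Lipschitz on the grid, and h is affine on each grid interval. Then for every q ∈ [0,1], q·h(q) − ∫₀^q h(y) dy + 1 − q ≥ Γ. -/
open Set intervalIntegral

set_option maxHeartbeats 2000000 in
theorem stmt_13 (n : ℕ) (hn : 0 < n) (Γ : ℝ) (h : ℝ → ℝ)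
    (hmono : MonotoneOn h (Icc 0 1))
    (hrange : ∀ x ∈ Icc (0:ℝ) 1, h x ∈ Icc (0:ℝ) 1)
    (h0 : h 0 = 0) (h1 : h 1 = 1)
    (haffine : ∀ i : ℕ, i < n → ∀ x ∈ Icc ((i : ℝ) / n) ((i + 1) / n),
      h x = h (i / n) + (x - i / n) * n * (h ((i + 1) / n) - h (i / n)))
    (hlipgrid : ∀ i : ℕ, i < n → h (((i : ℝ) + 1) / n) - h ((i : ℝ) / n) ≤ 2 / n)
    (hgrid : ∀ i : ℕ, i ≤ n →
      ((i : ℝ) / n) * h ((i : ℝ) / n) - (∫ y in (0:ℝ)..((i : ℝ) / n), h y) +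
        1 - (i : ℝ) / n ≥ Γ + 3 / (4 * n ^ 2)) :
    ∀ q ∈ Icc (0:ℝ) 1,
      q * h q - (∫ y in (0:ℝ)..q, h y) + 1 - q ≥ Γ := by
  intro q hq
  obtain ⟨hq0, hq1⟩ := hq
  set N : ℝ := (n : ℝ) with hNdef
  have hN : (0:ℝ) < N := by rw [hNdef]; exact_mod_cast hn
  have hN1 : (1:ℝ) ≤ N := by rw [hNdef]; exact_mod_cast hn
  have hε : (0:ℝ) < 3 / (4 * N ^ 2) := by positivity
  -- integrability of h on subintervals of [0,1]
  have hInt : ∀ x y : ℝ, x ∈ Icc (0:ℝ) 1 → y ∈ Icc (0:ℝ) 1 →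
      IntervalIntegrable h MeasureTheory.volume x y := by
    intro x y hx hy
    exact (hmono.mono (uIcc_subset_Icc hx hy)).intervalIntegrable
  rcases eq_or_lt_of_le hq1 with hq1' | hq1'
  · -- q = 1 : grid point
    have hnn : (n:ℝ)/n = 1 := div_self (ne_of_gt hN)
    have := hgrid n le_rfl
    rw [hnn] at this
    rw [hq1']
    linarith
  · -- q < 1 : q lies in cell [i/n, (i+1)/n]
    set i : ℕ := ⌊q * N⌋₊ with hidef
    have hi_le : (i:ℝ) ≤ q * N := Nat.floor_le (by positivity)
    have hi_lt : q * N < (i:ℝ) + 1 := Nat.lt_floor_add_one _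
    have hiltn : i < n := by
      have : (i:ℝ) < N := lt_of_le_of_lt hi_le (by nlinarith)
      rw [hNdef] at this
      exact_mod_cast this
    set a : ℝ := (i:ℝ) / N with hadef
    set b : ℝ := ((i:ℝ) + 1) / N with hbdef
    have haq : a ≤ q := by rw [hadef, div_le_iff₀ hN]; linarith
    have hqb : q ≤ b := by rw [hbdef, le_div_iff₀ hN]; linarith
    have hba : b - a = 1 / N := by rw [hadef, hbdef]; field_simp; ring
    have ha0 : (0:ℝ) ≤ a := by positivity
    have hb1 : b ≤ 1 := by
      rw [hbdef, div_le_one hN]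
      have : (i:ℝ) + 1 ≤ N := by rw [hNdef]; exact_mod_cast hiltn
      linarith
    have haI : a ∈ Icc (0:ℝ) 1 := ⟨ha0, le_trans haq hq1⟩
    have hbI : b ∈ Icc (0:ℝ) 1 := ⟨le_trans ha0 (by linarith), hb1⟩
    have hqI : q ∈ Icc (0:ℝ) 1 := ⟨hq0, hq1⟩
    set Δ : ℝ := h b - h a with hDdef
    have hΔ0 : (0:ℝ) ≤ Δ := by
      have := hmono haI hbI (by linarith)
      linarith
    have hΔ2 : Δ ≤ 2 / N := hlipgrid i hiltn
    -- the affine formula on [a,b]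
    have haff : ∀ x ∈ Icc a b, h x = h a + (x - a) * N * Δ := by
      intro x hx
      exact haffine i hiltn x hx
    -- integral of h over a..x for a ≤ x ≤ b
    have key : ∀ x, a ≤ x → x ≤ b →
        (∫ y in a..x, h y) = (x - a) * h a + (x - a) ^ 2 / 2 * (N * Δ) := by
      intro x hax hxb
      have hderiv : ∀ y ∈ uIcc a x,
          HasDerivAt (fun y => h a * y + N * Δ / 2 * (y - a) ^ 2) (h y) y := by
        intro y hy
        rw [uIcc_of_le hax] at hy
        have hy' : y ∈ Icc a b := ⟨hy.1, le_trans hy.2 hxb⟩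
        have d1 : HasDerivAt (fun y : ℝ => (y - a) ^ 2) (2 * (y - a)) y := by
          simpa [Pi.pow_def] using ((hasDerivAt_id y).sub_const a).pow 2
        have d2 := ((hasDerivAt_id y).const_mul (h a)).add (d1.const_mul (N * Δ / 2))
        have : h y = h a + N * Δ / 2 * (2 * (y - a)) := by
          rw [haff y hy']; ring
        rw [this]
        simpa [Pi.add_def] using d2
      have hint : IntervalIntegrable h MeasureTheory.volume a x :=
        hInt a x haI ⟨le_trans ha0 hax, le_trans hxb hb1⟩
      have := intervalIntegral.integral_eq_sub_of_hasDerivAt hderiv hint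
      rw [this]; ring
    -- split the integral at a
    have hsplit : ∀ x, a ≤ x → x ≤ b →
        (∫ y in (0:ℝ)..x, h y) = (∫ y in (0:ℝ)..a, h y) +
          ((x - a) * h a + (x - a) ^ 2 / 2 * (N * Δ)) := by
      intro x hax hxb
      have hxI : x ∈ Icc (0:ℝ) 1 := ⟨le_trans ha0 hax, le_trans hxb hb1⟩
      rw [← key x hax hxb]
      exact (intervalIntegral.integral_add_adjacent_intervals
        (hInt 0 a ⟨le_rfl, zero_le_one⟩ haI)
        (hInt a x haI hxI)).symm
    have hIq := hsplit q haq hqb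
    have hIb := hsplit b (by linarith) le_rfl
    have hhq : h q = h a + (q - a) * N * Δ := haff q ⟨haq, hqb⟩
    have hhb : h b = h a + Δ := by rw [hDdef]; ring
    -- grid inequalities at a and b
    have hFa : a * h a - (∫ y in (0:ℝ)..a, h y) + 1 - a ≥ Γ + 3 / (4 * N ^ 2) := by
      have := hgrid i (le_of_lt hiltn)
      exact this
    have hFb : b * h b - (∫ y in (0:ℝ)..b, h y) + 1 - b ≥ Γ + 3 / (4 * N ^ 2) := by
      have := hgrid (i + 1) hiltn
      push_cast at this
      exact this
    set Ia : ℝ := ∫ y in (0:ℝ)..a, h y with hIadef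
    -- parameters
    set s : ℝ := (q - a) * N with hsdef
    have hs0 : 0 ≤ s := by
      apply mul_nonneg (by linarith) (le_of_lt hN)
    have hs1 : s ≤ 1 := by
      rw [hsdef]
      have : q - a ≤ 1 / N := by linarith
      calc (q - a) * N ≤ (1 / N) * N := by nlinarith
        _ = 1 := by field_simp
    -- the convexity identity
    have hid : q * h q - (∫ y in (0:ℝ)..q, h y) + 1 - q
        = (1 - s) * (a * h a - Ia + 1 - a)
          + s * (b * h b - (Ia + ((b - a) * h a + (b - a) ^ 2 / 2 * (N * Δ))) + 1 - b)
          - (N * Δ / 2) * ((q - a) * (b - q)) := by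
      have hb' : b = a + 1 / N := by linarith
      rw [hIq, hhq, hhb, hsdef, hba, hb']
      clear_value N a b Δ Ia s
      clear hgrid haffine hlipgrid hmono hrange hInt hsplit hIq hIb
      field_simp
      ring
    rw [hIb] at hFb
    -- bound the correction term
    have hcorr : (N * Δ / 2) * ((q - a) * (b - q)) ≤ 3 / (4 * N ^ 2) := by
      have hq2 : 1 / (4 * N ^ 2) = (1/N)^2 / 4 := by
        field_simp
      have htu : (q - a) * (b - q) ≤ 1 / (4 * N ^ 2) := by
        rw [hq2]
        nlinarith [sq_nonneg ((q - a) - (b - q))]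
      have hNΔ : N * Δ / 2 ≤ 1 := by
        have h3 : Δ * N ≤ 2 := (le_div_iff₀ hN).mp hΔ2
        nlinarith
      have h1 : 0 ≤ (q - a) * (b - q) := mul_nonneg (by linarith) (by linarith)
      have h2 : 0 ≤ N * Δ / 2 := by positivity
      calc (N * Δ / 2) * ((q - a) * (b - q)) ≤ 1 * (1 / (4 * N ^ 2)) := by
            apply mul_le_mul hNΔ htu h1 (by norm_num)
        _ = 1 / (4 * N ^ 2) := by ring
        _ ≤ 3 / (4 * N ^ 2) := by
            rw [div_le_div_iff₀ (by positivity) (by positivity)]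
            nlinarith [sq_nonneg N]
    rw [hid]
    nlinarith [mul_nonneg hs0 (sub_nonneg.2 hFb), mul_nonneg (sub_nonneg.2 hs1) (sub_nonneg.2 hFa)]
end

section
/- Let g : [0,1] → [0,1] be nondecreasing. For all τ, γ ∈ [0,1], the quantity G₂(τ,γ) = ∫₀^τ g(y) dy + ∫₀^γ g(y) dy + (1−τ)(1−γ) is at least min over grid points: if g is affine on each interval [i/n,(i+1)/n], 1-Lipschitz on the grid, and G₂(τ̄,γ̄) ≥ L + 1/(4n²) for all grid points τ̄, γ̄ ∈ {0,1/n,...,1}, then G₂(τ,γ) ≥ L for all τ, γ ∈ [0,1]. -/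
open Set intervalIntegral

lemma quad_lb (m c h x : ℝ) (hm : 0 ≤ m) (hx0 : 0 ≤ x) (hxh : x ≤ h) :
    min 0 (c*h + m*h^2/2) - m*h^2/8 ≤ c*x + m*x^2/2 := by
  rcases le_or_gt 0 c with hc | hc
  · calc min 0 (c*h + m*h^2/2) - m*h^2/8 ≤ 0 := by
          have := min_le_left (0:ℝ) (c*h + m*h^2/2); nlinarith [sq_nonneg h]
       _ ≤ c*x + m*x^2/2 := by positivity
  · rcases le_or_gt 0 (2*c + m*h) with h1 | h1
    · have hmpos : 0 < m := by nlinarith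
      have key : 0 ≤ 8*c*x + 4*m*x^2 + m*h^2 := by
        nlinarith [sq_nonneg (m*x+c)]
      have := min_le_left (0:ℝ) (c*h + m*h^2/2)
      nlinarith
    · rcases le_or_gt 0 (2*c + 3*m*h) with h2 | h2
      · have hmpos : 0 < m := by nlinarith
        have key : 0 ≤ 8*c*(x-h) + 4*m*x^2 - 3*m*h^2 := by
          nlinarith [sq_nonneg (m*x+c)]
        have := min_le_right (0:ℝ) (c*h + m*h^2/2)
        nlinarith
      · have := min_le_right (0:ℝ) (c*h + m*h^2/2)
        nlinarith [mul_nonneg hm (sq_nonneg (x-h)), mul_nonneg hm hx0]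

lemma affine_int (g : ℝ → ℝ) (a C M : ℝ) (τ : ℝ) (haτ : a ≤ τ)
    (heq : ∀ x ∈ Icc a τ, g x = C + (x - a) * M) :
    (∫ y in a..τ, g y) = C * (τ - a) + M * (τ - a)^2 / 2 := by
  have h1 : (∫ y in a..τ, g y) = ∫ y in a..τ, (C + (y - a) * M) := by
    apply intervalIntegral.integral_congr
    intro x hx
    rw [uIcc_of_le haτ] at hx
    exact heq x hx
  rw [h1]
  have h2 : ∀ t ∈ uIcc a τ, HasDerivAt (fun y => C * (y - a) + M * (y - a)^2 / 2)
      (C + (t - a) * M) t := by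
    intro t _
    have d1 : HasDerivAt (fun y : ℝ => y - a) 1 t := (hasDerivAt_id t).sub_const a
    have := ((d1.const_mul C).add (((d1.pow 2).const_mul M).div_const 2))
    refine this.congr_deriv ?_
    push_cast
    ring
  rw [intervalIntegral.integral_eq_sub_of_hasDerivAt h2
    (by apply Continuous.intervalIntegrable; continuity)]
  ring

theorem stmt_15 (n : ℕ) (hn : 0 < n) (L : ℝ) (g : ℝ → ℝ)
    (hmono : MonotoneOn g (Icc 0 1))
    (hrange : ∀ x ∈ Icc (0:ℝ) 1, g x ∈ Icc (0:ℝ) 1)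
    (haffine : ∀ i : ℕ, i < n → ∀ x ∈ Icc ((i : ℝ) / n) ((i + 1) / n),
      g x = g (i / n) + (x - i / n) * n * (g ((i + 1) / n) - g (i / n)))
    (hlipgrid : ∀ i : ℕ, i < n → g (((i : ℝ) + 1) / n) - g ((i : ℝ) / n) ≤ 1 / n)
    (G₂ : ℝ → ℝ → ℝ)
    (hG₂ : ∀ τ γ : ℝ, G₂ τ γ =
      (∫ y in (0:ℝ)..τ, g y) + (∫ y in (0:ℝ)..γ, g y) + (1 - τ) * (1 - γ))
    (hgrid : ∀ i j : ℕ, i ≤ n → j ≤ n →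
      G₂ ((i : ℝ) / n) ((j : ℝ) / n) ≥ L + 1 / (4 * n ^ 2)) :
    ∀ τ ∈ Icc (0:ℝ) 1, ∀ γ ∈ Icc (0:ℝ) 1, G₂ τ γ ≥ L := by
  have hn0 : (0:ℝ) < n := by exact_mod_cast hn
  -- integrability of g on subintervals of [0,1]
  have hgint : ∀ a b : ℝ, a ∈ Icc (0:ℝ) 1 → b ∈ Icc (0:ℝ) 1 →
      IntervalIntegrable g MeasureTheory.volume a b := by
    intro a b ha hb
    apply MonotoneOn.intervalIntegrable
    intro x hx y hy hxy
    have hsub : uIcc a b ⊆ Icc (0:ℝ) 1 := uIcc_subset_Icc ha hb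
    exact hmono (hsub hx) (hsub hy) hxy
  -- the one-variable discretization step
  have step : ∀ γ' : ℝ, ∀ K : ℝ, (∀ i : ℕ, i ≤ n → G₂ ((i:ℝ)/n) γ' ≥ K) →
      ∀ σ ∈ Icc (0:ℝ) 1, G₂ σ γ' ≥ K - 1/(8*(n:ℝ)^2) := by
    intro γ' K hK σ hσ
    obtain ⟨hσ0, hσ1⟩ := hσ
    -- find the cell containing σ
    set i : ℕ := min (⌊(n:ℝ)*σ⌋.toNat) (n-1) with hi
    have hin : i < n := lt_of_le_of_lt (min_le_right _ _) (Nat.pred_lt hn.ne')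
    have hfl0 : (0:ℤ) ≤ ⌊(n:ℝ)*σ⌋ := Int.le_floor.mpr (by push_cast; positivity)
    have hale : ((i:ℝ))/n ≤ σ := by
      have h1 : (i:ℝ) ≤ (n:ℝ)*σ := by
        have : (i:ℝ) ≤ (⌊(n:ℝ)*σ⌋.toNat : ℝ) := by
          exact_mod_cast min_le_left (⌊(n:ℝ)*σ⌋.toNat) (n-1)
        have h2 : ((⌊(n:ℝ)*σ⌋.toNat : ℤ):ℝ) ≤ (n:ℝ)*σ := by
          rw [Int.toNat_of_nonneg hfl0]; exact Int.floor_le _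
        push_cast at h2 ⊢
        linarith
      rw [div_le_iff₀ hn0]; linarith [h1]
    have hble : σ ≤ ((i:ℝ)+1)/n := by
      rcases le_or_gt (⌊(n:ℝ)*σ⌋.toNat) (n-1) with hc | hc
      · have hieq : i = ⌊(n:ℝ)*σ⌋.toNat := min_eq_left hc
        have h2 : (n:ℝ)*σ < (⌊(n:ℝ)*σ⌋ : ℝ) + 1 := Int.lt_floor_add_one _
        have h3 : ((⌊(n:ℝ)*σ⌋.toNat : ℤ):ℝ) = (⌊(n:ℝ)*σ⌋ : ℝ) := by
          rw [Int.toNat_of_nonneg hfl0]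
        rw [le_div_iff₀ hn0, hieq]
        push_cast at h3 ⊢
        rw [h3]
        linarith
      · have hieq : i = n - 1 := min_eq_right hc.le
        have : (i:ℝ) + 1 = n := by
          rw [hieq]
          have : n - 1 + 1 = n := Nat.succ_pred_eq_of_pos hn
          exact_mod_cast congrArg (Nat.cast (R := ℝ)) this
        rw [this, div_self hn0.ne']
        exact hσ1
    set a : ℝ := (i:ℝ)/n with ha
    set b : ℝ := ((i:ℝ)+1)/n with hb
    have hab : b - a = 1/n := by rw [ha, hb]; field_simp; ring
    have ha01 : a ∈ Icc (0:ℝ) 1 := by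
      constructor
      · positivity
      · rw [ha, div_le_one hn0]; exact_mod_cast hin.le
    have hb01 : b ∈ Icc (0:ℝ) 1 := by
      constructor
      · positivity
      · rw [hb, div_le_one hn0]
        have : (i:ℝ) + 1 ≤ n := by exact_mod_cast hin
        exact this
    set m : ℝ := (n:ℝ) * (g b - g a) with hm
    have hm0 : 0 ≤ m := by
      have : g a ≤ g b := hmono ha01 hb01 (by rw [ha, hb]; gcongr; linarith)
      have := sub_nonneg.mpr this
      positivity
    have hmh : m * (1/n)^2 ≤ 1/(n:ℝ)^2 := by
      have := hlipgrid i hin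
      rw [hm]
      have hgb : g b - g a ≤ 1/n := this
      calc (n:ℝ) * (g b - g a) * (1/n)^2 ≤ (n:ℝ) * (1/n) * (1/n)^2 := by
            rw [mul_le_mul_iff_of_pos_right (by positivity : (0:ℝ) < (1/(n:ℝ))^2)]
            exact mul_le_mul_of_nonneg_left hgb hn0.le
        _ = 1/(n:ℝ)^2 * ((n:ℝ) * (1/n)) := by ring
        _ = 1/(n:ℝ)^2 := by rw [mul_one_div, div_self hn0.ne', mul_one]
    -- expansion of G₂ on the cell
    have expand : ∀ t, a ≤ t → t ≤ b →
        G₂ t γ' = G₂ a γ' + (g a - (1-γ')) * (t-a) + m*(t-a)^2/2 := by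
      intro t hat htb
      have ht01 : t ∈ Icc (0:ℝ) 1 := ⟨le_trans ha01.1 hat, le_trans htb hb01.2⟩
      have hsplit : (∫ y in (0:ℝ)..t, g y) =
          (∫ y in (0:ℝ)..a, g y) + (∫ y in a..t, g y) := by
        rw [intervalIntegral.integral_add_adjacent_intervals
          (hgint 0 a (by simp) ha01) (hgint a t ha01 ht01)]
      have hcell : (∫ y in a..t, g y) = g a * (t - a) + m * (t - a)^2 / 2 := by
        apply affine_int g a (g a) m t hat
        intro x hx
        have hx' : x ∈ Icc a b := ⟨hx.1, le_trans hx.2 htb⟩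
        have := haffine i hin x hx'
        rw [this, hm, ha]
        ring
      rw [hG₂ t γ', hG₂ a γ', hsplit, hcell,
        show (∫ y in (0:ℝ)..a, g y) = g a * (a - a) + m * (a - a)^2 / 2 +
          (∫ y in (0:ℝ)..a, g y) - (g a * (a-a) + m*(a-a)^2/2) by ring]
      ring
    -- apply quad_lb
    set c : ℝ := g a - (1 - γ') with hc
    set x : ℝ := σ - a with hx
    have hGσ : G₂ σ γ' = G₂ a γ' + c*x + m*x^2/2 := by
      rw [expand σ hale hble]
    have hGb : G₂ b γ' = G₂ a γ' + c*(1/n) + m*(1/n)^2/2 := by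
      have := expand b (by linarith [hab, hn0] : a ≤ b) le_rfl
      rw [this, hab]
    have hquad := quad_lb m c (1/n) x hm0 (by rw [hx]; linarith)
      (by rw [hx]; linarith [hab])
    have hKa : G₂ a γ' ≥ K := hK i hin.le
    have hKb : G₂ b γ' ≥ K := by
      have := hK (i+1) hin
      have hcast : ((i+1:ℕ):ℝ)/n = b := by push_cast [hb]; ring
      rwa [hcast] at this
    have hmin : K ≤ G₂ a γ' + min 0 (c*(1/n) + m*(1/n)^2/2) := by
      rcases min_cases (0:ℝ) (c*(1/n) + m*(1/n)^2/2) with ⟨heq, _⟩ | ⟨heq, _⟩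
      · rw [heq]; linarith
      · rw [heq]; linarith [hGb]
    have : G₂ σ γ' ≥ K - m*(1/n)^2/8 := by
      rw [hGσ]; linarith [hquad]
    have : K - m*(1/n)^2/8 ≥ K - 1/(8*(n:ℝ)^2) := by
      have : m*(1/n)^2/8 ≤ 1/(8*(n:ℝ)^2) := by
        rw [show (1:ℝ)/(8*(n:ℝ)^2) = (1/(n:ℝ)^2)/8 by ring]
        linarith [hmh]
      linarith
    linarith
  -- symmetry of G₂
  have hsymm : ∀ s t : ℝ, G₂ s t = G₂ t s := by
    intro s t; rw [hG₂, hG₂]; ring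
  -- first pass: grid in second coordinate
  intro τ hτ γ hγ
  have pass1 : ∀ j : ℕ, j ≤ n → G₂ ((j:ℝ)/n) τ ≥ L + 1/(8*(n:ℝ)^2) := by
    intro j hj
    have h1 : ∀ i : ℕ, i ≤ n → G₂ ((i:ℝ)/n) ((j:ℝ)/n) ≥ L + 1/(4*(n:ℝ)^2) := by
      intro i hi
      have := hgrid i j hi hj
      have hc : (1:ℝ)/(4*(n:ℝ)^2) = 1/(4*((n:ℕ):ℝ)^2) := by norm_num
      linarith [this]
    have := step ((j:ℝ)/n) (L + 1/(4*(n:ℝ)^2)) h1 τ hτ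
    have harith : L + 1/(4*(n:ℝ)^2) - 1/(8*(n:ℝ)^2) = L + 1/(8*(n:ℝ)^2) := by
      field_simp; ring
    rw [harith] at this
    rw [hsymm]
    exact this
  have := step τ (L + 1/(8*(n:ℝ)^2)) pass1 γ hγ
  rw [hsymm]
  linarith [this]
end
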